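/- Let 𝒪 ⊆ ℕ² be the finite nonempty order ideal determined by a partition λ = (λ_1 ≥ ⋯ ≥ λ_m ≥ 1), i.e. (a_1, a_2) ∈ 𝒪 iff a_1 < m and a_2 < λ_{a_1+1}. Then in ℚ[[y_1, y_2]]: Σ_{α ∈ ℕ²} ind_𝒪(α) y^α = y_1^m y_2^{λ_1} Σ_{(i_1,i_2) ∈ ℕ²} (i_1 + i_2 + ind_𝒪(m, λ_1)) y_1^{i_1} y_2^{i_2} + Σ_{j=0}^{m−1} y_1^j y_2^{λ_1} Σ_{i ≥ 0} (i + ind_𝒪(j, λ_1)) y_2^i + Σ_{j=0}^{λ_1−1} y_1^m y_2^j Σ_{i ≥ 0} (i + ind_𝒪(m, j)) y_1^i + Σ_{(a_1, a_2) ∉ 𝒪, a_1 < m, a_2 < λ_1} ind_𝒪(a_1, a_2) y_1^{a_1} y_2^{a_2}. -/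

import Mathlib

/-- An order ideal in ℕ^n: a set of exponent vectors closed under componentwise division. -/
def IsOrderIdeal {n : ℕ} (O : Set (Fin n →₀ ℕ)) : Prop :=
  ∀ α ∈ O, ∀ β : Fin n →₀ ℕ, β ≤ α → β ∈ O

/-- The border of a set `C ⊆ ℕ^n`: `∂C = {α + e_i : α ∈ C, i} \ C`. -/
def border {n : ℕ} (C : Set (Fin n →₀ ℕ)) : Set (Fin n →₀ ℕ) :=
  {γ | ∃ α ∈ C, ∃ i : Fin n, γ = α + Finsupp.single i 1} \ C

/-- The closed higher borders: `∂̄⁰O = O`, `∂̄ᵏO = ∂(∂̄ᵏ⁻¹O) ∪ ∂̄ᵏ⁻¹O`. -/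
def closedBorder {n : ℕ} (O : Set (Fin n →₀ ℕ)) : ℕ → Set (Fin n →₀ ℕ)
  | 0 => O
  | k + 1 => border (closedBorder O k) ∪ closedBorder O k

/-- The higher borders: `∂⁰O = O`, `∂ᵏO = ∂(∂̄ᵏ⁻¹O)`. -/
def borderIter {n : ℕ} (O : Set (Fin n →₀ ℕ)) : ℕ → Set (Fin n →₀ ℕ)
  | 0 => O
  | k + 1 => border (closedBorder O k)

/-- The index of `α` relative to `O`: the minimal `k` with `α ∈ ∂̄ᵏO`. -/
noncomputable def ind {n : ℕ} (O : Set (Fin n →₀ ℕ)) (α : Fin n →₀ ℕ) : ℕ :=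
  sInf {k | α ∈ closedBorder O k}

/-- Total degree of an exponent vector. -/
def deg {n : ℕ} (α : Fin n →₀ ℕ) : ℕ := ∑ i, α i

/-- The multivariate formal power series with prescribed coefficients. -/
noncomputable def seriesOfCoeff {n : ℕ} (f : (Fin n →₀ ℕ) → ℚ) : MvPowerSeries (Fin n) ℚ := f

/-- The point `(a, b) ∈ ℕ²` as a finitely supported function. -/
noncomputable def pt (a b : ℕ) : Fin 2 →₀ ℕ := Finsupp.single 0 a + Finsupp.single 1 b


lemma deg_add {n : ℕ} (a b : Fin n →₀ ℕ) : deg (a + b) = deg a + deg b := by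
  simp [deg, Finsupp.add_apply, Finset.sum_add_distrib]

lemma deg_eq_zero {n : ℕ} (a : Fin n →₀ ℕ) : deg a = 0 ↔ a = 0 := by
  constructor
  · intro h; ext i
    have := Finset.sum_eq_zero_iff.mp h i (Finset.mem_univ i)
    simpa using this
  · rintro rfl; simp [deg]

lemma deg_single {n : ℕ} (i : Fin n) (c : ℕ) : deg (Finsupp.single i c) = c := by
  simp [deg, Finsupp.single_apply]

lemma deg_mono {n : ℕ} {a b : Fin n →₀ ℕ} (h : a ≤ b) : deg a ≤ deg b :=
  Finset.sum_le_sum fun i _ => h i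

lemma closedBorder_eq {n : ℕ} (O : Set (Fin n →₀ ℕ)) (k : ℕ) :
    closedBorder O k = {α | ∃ β ∈ O, ∃ γ, deg γ ≤ k ∧ α = β + γ} := by
  induction k with
  | zero =>
      ext α
      simp only [closedBorder, Set.mem_setOf_eq]
      constructor
      · intro h; exact ⟨α, h, 0, by simp [deg], by simp⟩
      · rintro ⟨β, hβ, γ, hγ, rfl⟩
        have : γ = 0 := (deg_eq_zero γ).mp (Nat.le_zero.mp hγ)
        simpa [this] using hβ
  | succ k ih =>
      ext α
      simp only [closedBorder, Set.mem_union, ih, Set.mem_setOf_eq]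
      constructor
      · rintro (⟨⟨a, ha, i, rfl⟩, -⟩ | ⟨β, hβ, γ, hγ, rfl⟩)
        · obtain ⟨β, hβ, γ, hγ, rfl⟩ := ha
          exact ⟨β, hβ, γ + Finsupp.single i 1, by
            rw [deg_add, deg_single]; omega, by rw [add_assoc]⟩
        · exact ⟨β, hβ, γ, le_trans hγ (Nat.le_succ k), rfl⟩
      · rintro ⟨β, hβ, γ, hγ, rfl⟩
        by_cases hk : deg γ ≤ k
        · exact Or.inr ⟨β, hβ, γ, hk, rfl⟩
        · have hγ0 : γ ≠ 0 := by
            intro h; rw [h] at hk; simp [deg] at hk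
          obtain ⟨i, hi⟩ : ∃ i, γ i ≠ 0 := by
            by_contra h; push_neg at h
            exact hγ0 (Finsupp.ext fun i => h i)
          have hle : Finsupp.single i 1 ≤ γ := by
            rw [Finsupp.le_def]
            intro j
            rcases eq_or_ne j i with rfl | hji
            · simpa using Nat.one_le_iff_ne_zero.mpr hi
            · simp [Finsupp.single_apply, Ne.symm hji]
          set γ' := γ - Finsupp.single i 1 with hγ'
          have hγeq : γ = γ' + Finsupp.single i 1 := by
            rw [hγ', tsub_add_cancel_of_le hle]
          have hdeg' : deg γ' ≤ k := by
            have : deg γ' + 1 = deg γ := by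
              rw [hγeq, deg_add, deg_single]
            omega
          have hmem : β + γ' ∈ {α | ∃ β ∈ O, ∃ γ, deg γ ≤ k ∧ α = β + γ} :=
            ⟨β, hβ, γ', hdeg', rfl⟩
          by_cases hα : β + γ ∈ {α | ∃ β ∈ O, ∃ γ, deg γ ≤ k ∧ α = β + γ}
          · exact Or.inr hα
          · refine Or.inl ⟨⟨β + γ', hmem, i, ?_⟩, hα⟩
            rw [hγeq, add_assoc]

lemma sInf_upperSet (S : Set ℕ) : sInf {k | ∃ d ∈ S, d ≤ k} = sInf S := by
  rcases S.eq_empty_or_nonempty with rfl | hS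
  · simp
  · apply le_antisymm
    · exact Nat.sInf_le ⟨sInf S, Nat.sInf_mem hS, le_rfl⟩
    · have hne : {k | ∃ d ∈ S, d ≤ k}.Nonempty := ⟨sInf S, sInf S, Nat.sInf_mem hS, le_rfl⟩
      obtain ⟨d, hd, hdk⟩ := Nat.sInf_mem hne
      exact le_trans (Nat.sInf_le hd) hdk

lemma ind_eq_sInf {n : ℕ} (O : Set (Fin n →₀ ℕ)) (α : Fin n →₀ ℕ) :
    ind O α = sInf ((fun β => deg α - deg β) '' {β | β ∈ O ∧ β ≤ α}) := by
  rw [ind]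
  rw [show {k | α ∈ closedBorder O k}
      = {k | ∃ d ∈ (fun β => deg α - deg β) '' {β | β ∈ O ∧ β ≤ α}, d ≤ k} from ?_]
  · exact sInf_upperSet _
  · ext k
    simp only [Set.mem_setOf_eq, closedBorder_eq, Set.mem_image]
    constructor
    · rintro ⟨β, hβ, γ, hγ, rfl⟩
      refine ⟨deg (β + γ) - deg β, ⟨β, ⟨hβ, le_self_add⟩, rfl⟩, ?_⟩
      rw [deg_add]; omega
    · rintro ⟨d, ⟨β, ⟨hβ, hle⟩, rfl⟩, hdk⟩
      refine ⟨β, hβ, α - β, ?_, (add_tsub_cancel_of_le hle).symm⟩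
      have h1 : deg β + deg (α - β) = deg α := by
        rw [← deg_add, add_tsub_cancel_of_le hle]
      omega

lemma ind_zero_of_mem {n : ℕ} {O : Set (Fin n →₀ ℕ)} {α : Fin n →₀ ℕ} (h : α ∈ O) :
    ind O α = 0 :=
  Nat.sInf_eq_zero.mpr (Or.inl h)

lemma ind_add {n : ℕ} (O : Set (Fin n →₀ ℕ)) (h0 : (0 : Fin n →₀ ℕ) ∈ O)
    (α δ : Fin n →₀ ℕ) (h : ∀ β ∈ O, (β ≤ α + δ ↔ β ≤ α)) :
    ind O (α + δ) = ind O α + deg δ := by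
  rw [ind_eq_sInf, ind_eq_sInf]
  have hset : {β | β ∈ O ∧ β ≤ α + δ} = {β | β ∈ O ∧ β ≤ α} := by
    ext β; exact and_congr_right fun hβ => h β hβ
  rw [hset]
  have himg : (fun β => deg (α + δ) - deg β) '' {β | β ∈ O ∧ β ≤ α}
      = (· + deg δ) '' ((fun β => deg α - deg β) '' {β | β ∈ O ∧ β ≤ α}) := by
    rw [Set.image_image]
    apply Set.image_congr
    rintro β ⟨-, hle⟩
    have := deg_mono hle
    rw [deg_add]; omega
  rw [himg]
  have hS : ((fun β => deg α - deg β) '' {β | β ∈ O ∧ β ≤ α}).Nonempty :=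
    ⟨_, ⟨0, ⟨h0, zero_le⟩, rfl⟩⟩
  apply le_antisymm
  · exact Nat.sInf_le ⟨_, Nat.sInf_mem hS, rfl⟩
  · refine le_csInf (hS.image _) ?_
    rintro _ ⟨d, hd, rfl⟩
    exact Nat.add_le_add_right (Nat.sInf_le hd) _

lemma pt_apply0 (a b : ℕ) : pt a b 0 = a := by
  simp [pt, Finsupp.single_apply]

lemma pt_apply1 (a b : ℕ) : pt a b 1 = b := by
  simp [pt, Finsupp.single_apply]

lemma pt_eq (α : Fin 2 →₀ ℕ) : pt (α 0) (α 1) = α := by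
  ext i
  fin_cases i
  · exact pt_apply0 _ _
  · exact pt_apply1 _ _

lemma le2 (β γ : Fin 2 →₀ ℕ) : β ≤ γ ↔ β 0 ≤ γ 0 ∧ β 1 ≤ γ 1 := by
  rw [Finsupp.le_def, Fin.forall_fin_two]

lemma pt_le_pt (a b c d : ℕ) : pt a b ≤ pt c d ↔ a ≤ c ∧ b ≤ d := by
  rw [le2]; simp [pt_apply0, pt_apply1]

lemma pt_add (a b c d : ℕ) : pt a b + pt c d = pt (a + c) (b + d) := by
  ext i
  fin_cases i <;> simp [Finsupp.add_apply, pt_apply0, pt_apply1]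

lemma pt_sub (a b c d : ℕ) : pt a b - pt c d = pt (a - c) (b - d) := by
  ext i
  fin_cases i <;> simp [Finsupp.tsub_apply, pt_apply0, pt_apply1]

lemma pt_inj {a b c d : ℕ} (h : pt a b = pt c d) : a = c ∧ b = d := by
  constructor
  · rw [← pt_apply0 a b, h, pt_apply0]
  · rw [← pt_apply1 a b, h, pt_apply1]

lemma deg_pt (a b : ℕ) : deg (pt a b) = a + b := by
  rw [deg, Fin.sum_univ_two, pt_apply0, pt_apply1]

lemma coeff_seriesOfCoeff {n : ℕ} (f : (Fin n →₀ ℕ) → ℚ) (d : Fin n →₀ ℕ) :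
    MvPowerSeries.coeff (R := ℚ) d (seriesOfCoeff f) = f d := rfl

/-- For the order ideal `O ⊆ ℕ²` given by a partition `λ = (λ_1 ≥ ⋯ ≥ λ_m ≥ 1)`, in `ℚ[[y₁,y₂]]`:
`Σ_α ind_O(α) y^α
  = y₁^m y₂^{λ₁} Σ_{(i₁,i₂)} (i₁ + i₂ + ind_O(m,λ₁)) y₁^{i₁} y₂^{i₂}
  + Σ_{j<m} y₁^j y₂^{λ₁} Σ_i (i + ind_O(j,λ₁)) y₂^i
  + Σ_{j<λ₁} y₁^m y₂^j Σ_i (i + ind_O(m,j)) y₁^i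
  + Σ_{(a₁,a₂) ∉ O, a₁<m, a₂<λ₁} ind_O(a₁,a₂) y₁^{a₁} y₂^{a₂}`. -/
theorem ind_genFun_dim2_formula (m : ℕ) (hm : 1 ≤ m) (l : Fin m → ℕ)
    (hpos : ∀ i, 1 ≤ l i) (hdec : Antitone l)
    (O : Set (Fin 2 →₀ ℕ))
    (hO : O = {a : Fin 2 →₀ ℕ | ∃ h : a 0 < m, a 1 < l ⟨a 0, h⟩}) :
    seriesOfCoeff (fun α => (ind O α : ℚ)) =
      MvPowerSeries.monomial (R := ℚ) (pt m (l ⟨0, hm⟩)) (1 : ℚ) *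
        seriesOfCoeff (fun β => (β 0 : ℚ) + (β 1 : ℚ) + (ind O (pt m (l ⟨0, hm⟩)) : ℚ))
      + ∑ j ∈ Finset.range m,
          MvPowerSeries.monomial (R := ℚ) (pt j (l ⟨0, hm⟩)) (1 : ℚ) *
            seriesOfCoeff ({β : Fin 2 →₀ ℕ | β 0 = 0}.indicator
              fun β => (β 1 : ℚ) + (ind O (pt j (l ⟨0, hm⟩)) : ℚ))
      + ∑ j ∈ Finset.range (l ⟨0, hm⟩),
          MvPowerSeries.monomial (R := ℚ) (pt m j) (1 : ℚ) *
            seriesOfCoeff ({β : Fin 2 →₀ ℕ | β 1 = 0}.indicator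
              fun β => (β 0 : ℚ) + (ind O (pt m j) : ℚ))
      + ∑ a ∈ Finset.range m ×ˢ Finset.range (l ⟨0, hm⟩),
          MvPowerSeries.monomial (R := ℚ) (pt a.1 a.2)
            (Oᶜ.indicator (fun t => (ind O t : ℚ)) (pt a.1 a.2)) := by
  classical
  set L := l ⟨0, hm⟩ with hLdef
  have hmem : ∀ β : Fin 2 →₀ ℕ, β ∈ O ↔ ∃ h : β 0 < m, β 1 < l ⟨β 0, h⟩ := fun β => by
    rw [hO]; rfl
  have hbound : ∀ β ∈ O, β 0 < m ∧ β 1 < L := by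
    intro β hβ
    obtain ⟨h1, h2⟩ := (hmem β).mp hβ
    exact ⟨h1, lt_of_lt_of_le h2 (hdec (Fin.mk_le_mk.mpr (Nat.zero_le _)))⟩
  have h0O : (0 : Fin 2 →₀ ℕ) ∈ O := (hmem 0).mpr ⟨hm, hpos _⟩
  apply MvPowerSeries.ext
  intro α
  obtain ⟨a, b, rfl⟩ : ∃ a b, α = pt a b := ⟨α 0, α 1, (pt_eq α).symm⟩
  rw [map_add, map_add, map_add, map_sum, map_sum, map_sum]
  simp only [MvPowerSeries.coeff_monomial_mul, MvPowerSeries.coeff_monomial,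
    coeff_seriesOfCoeff, one_mul, pt_le_pt, pt_sub, pt_apply0, pt_apply1]
  have keyA : ∀ c d : ℕ, ind O (pt (m + c) (L + d)) = ind O (pt m L) + (c + d) := by
    intro c d
    have h := ind_add O h0O (pt m L) (pt c d) (by
      intro β hβ
      obtain ⟨h1, h2⟩ := hbound β hβ
      have hβle : β ≤ pt m L := by
        rw [le2, pt_apply0, pt_apply1]; exact ⟨h1.le, h2.le⟩
      exact iff_of_true (le_trans hβle le_self_add) hβle)
    rw [pt_add, deg_pt] at h
    exact h
  have keyB : ∀ j d : ℕ, ind O (pt j (L + d)) = ind O (pt j L) + d := by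
    intro j d
    have h := ind_add O h0O (pt j L) (pt 0 d) (by
      intro β hβ
      obtain ⟨h1, h2⟩ := hbound β hβ
      rw [pt_add, le2, le2, pt_apply0, pt_apply1, pt_apply0, pt_apply1]
      constructor
      · rintro ⟨ha, -⟩; exact ⟨by omega, h2.le⟩
      · rintro ⟨ha, -⟩; exact ⟨by omega, by omega⟩)
    rw [pt_add, deg_pt] at h
    simpa using h
  have keyC : ∀ j c : ℕ, ind O (pt (m + c) j) = ind O (pt m j) + c := by
    intro j c
    have h := ind_add O h0O (pt m j) (pt c 0) (by
      intro β hβ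
      obtain ⟨h1, h2⟩ := hbound β hβ
      rw [pt_add, le2, le2, pt_apply0, pt_apply1, pt_apply0, pt_apply1]
      constructor
      · rintro ⟨-, hb2⟩; exact ⟨h1.le, by omega⟩
      · rintro ⟨-, hb2⟩; exact ⟨by omega, by omega⟩)
    rw [pt_add, deg_pt] at h
    simpa using h
  rcases Nat.lt_or_ge a m with ham | ham <;> rcases Nat.lt_or_ge b L with hbL | hbL
  · -- a < m, b < L
    rw [if_neg (by omega),
      Finset.sum_eq_zero (fun j hj => if_neg (by omega)),
      Finset.sum_eq_zero (fun j hj => if_neg (by omega)),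
      Finset.sum_eq_single (a, b)
        (fun p hp hne => by
          rw [if_neg]
          intro heq
          obtain ⟨h1, h2⟩ := pt_inj heq
          exact hne (Prod.ext_iff.mpr ⟨h1.symm, h2.symm⟩))
        (fun h => absurd (Finset.mem_product.mpr
          ⟨Finset.mem_range.mpr ham, Finset.mem_range.mpr hbL⟩) h),
      if_pos rfl]
    by_cases hab : pt a b ∈ O
    · rw [Set.indicator_of_notMem (by simpa using hab), ind_zero_of_mem hab]
      simp
    · rw [Set.indicator_of_mem (Set.mem_compl hab)]
      simp
  · -- a < m, L ≤ b
    rw [if_neg (by omega),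
      Finset.sum_eq_single a
        (fun j hj hne => by
          by_cases h' : j ≤ a ∧ L ≤ b
          · rw [if_pos h', Set.indicator_of_notMem]
            simp only [Set.mem_setOf_eq, pt_apply0]
            omega
          · rw [if_neg h'])
        (fun h => absurd (Finset.mem_range.mpr ham) h),
      if_pos ⟨le_rfl, hbL⟩,
      Set.indicator_of_mem (by simp [Set.mem_setOf_eq, pt_apply0]), pt_apply1,
      Finset.sum_eq_zero (fun j hj => if_neg (by omega)),
      Finset.sum_eq_zero (fun p hp => by
        rw [if_neg]
        intro heq
        obtain ⟨-, h2⟩ := pt_inj heq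
        have := (Finset.mem_product.mp hp).2
        rw [Finset.mem_range] at this
        omega)]
    have hab : pt a b = pt a (L + (b - L)) := by congr 1; omega
    rw [hab, keyB a (b - L)]
    push_cast
    ring
  · -- m ≤ a, b < L
    rw [if_neg (by omega),
      Finset.sum_eq_zero (fun j hj => if_neg (by omega)),
      Finset.sum_eq_single b
        (fun j hj hne => by
          by_cases h' : m ≤ a ∧ j ≤ b
          · rw [if_pos h', Set.indicator_of_notMem]
            simp only [Set.mem_setOf_eq, pt_apply1]
            omega
          · rw [if_neg h'])
        (fun h => absurd (Finset.mem_range.mpr hbL) h),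
      if_pos ⟨ham, le_rfl⟩,
      Set.indicator_of_mem (by simp [Set.mem_setOf_eq, pt_apply1]), pt_apply0,
      Finset.sum_eq_zero (fun p hp => by
        rw [if_neg]
        intro heq
        obtain ⟨h1, -⟩ := pt_inj heq
        have := (Finset.mem_product.mp hp).1
        rw [Finset.mem_range] at this
        omega)]
    have hab : pt a b = pt (m + (a - m)) b := by congr 1; omega
    rw [hab, keyC b (a - m)]
    push_cast
    ring
  · -- m ≤ a, L ≤ b
    rw [if_pos ⟨ham, hbL⟩,
      Finset.sum_eq_zero (fun j hj => by
        have hjm := Finset.mem_range.mp hj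
        by_cases h' : j ≤ a ∧ L ≤ b
        · rw [if_pos h', Set.indicator_of_notMem]
          simp only [Set.mem_setOf_eq, pt_apply0]
          omega
        · rw [if_neg h']),
      Finset.sum_eq_zero (fun j hj => by
        have hjL := Finset.mem_range.mp hj
        by_cases h' : m ≤ a ∧ j ≤ b
        · rw [if_pos h', Set.indicator_of_notMem]
          simp only [Set.mem_setOf_eq, pt_apply1]
          omega
        · rw [if_neg h']),
      Finset.sum_eq_zero (fun p hp => by
        rw [if_neg]
        intro heq
        obtain ⟨h1, -⟩ := pt_inj heq
        have := (Finset.mem_product.mp hp).1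
        rw [Finset.mem_range] at this
        omega)]
    have hab : pt a b = pt (m + (a - m)) (L + (b - L)) := by congr 1 <;> omega
    rw [hab, keyA (a - m) (b - L)]
    push_cast
    ring
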